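/- Let (X₁, X₂, Z) be a basis of R₁ and let φ ∈ 𝕎 be a matrix of the form [[X₁, Z, 0],[q₁₁, q₁₂, Z],[q₂₁, q₂₂, X₂]] with q₁₁, q₁₂, q₂₁, q₂₂ ∈ R₂. Then there exist (ν₁, ν₂) ∈ G, scalars a, b ∈ ℂ, and quadratic forms q′₁₂, q′₂₁ ∈ R₂, where q′₁₂ has zero coefficient of Z² when written in the monomial basis determined by (X₁, X₂, Z), such that ν₂ φ ν₁⁻¹ = [[X₁, Z, 0],[a·X₂², q′₁₂, Z],[q′₂₁, b·X₁², X₂]]. -/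

import Mathlib

open MvPolynomial Matrix

noncomputable section

/-- The polynomial ring `R = ℂ[x₀,x₁,x₂]`. -/
abbrev Rp : Type := MvPolynomial (Fin 3) ℂ

/-- `p` is a linear form. -/
def IsLin (p : Rp) : Prop := p.IsHomogeneous 1

/-- `p` is a quadratic form. -/
def IsQuad (p : Rp) : Prop := p.IsHomogeneous 2

/-- The matrix `ν₁ = [[A, 0],[φ, α]]`. -/
def nu1 (A : Matrix (Fin 2) (Fin 2) ℂ) (α : ℂ) (φ : Fin 2 → Rp) :
    Matrix (Fin 3) (Fin 3) Rp :=
  !![C (A 0 0), C (A 0 1), 0;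
     C (A 1 0), C (A 1 1), 0;
     φ 0, φ 1, C α]

/-- The matrix `ν₂ = [[β, 0],[ψ, B]]`. -/
def nu2 (B : Matrix (Fin 2) (Fin 2) ℂ) (β : ℂ) (ψ : Fin 2 → Rp) :
    Matrix (Fin 3) (Fin 3) Rp :=
  !![C β, 0, 0;
     ψ 0, C (B 0 0), C (B 0 1);
     ψ 1, C (B 1 0), C (B 1 1)]

/-! ### Auxiliary lemmas -/

lemma finsupp_degree_eq_sum3 (d : Fin 3 →₀ ℕ) : d.degree = d 0 + d 1 + d 2 := by
  rw [Finsupp.degree, ← Fin.sum_univ_three (fun i => d i)]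
  exact Finset.sum_subset (Finset.subset_univ _)
    (fun x _ hx => Finsupp.notMem_support_iff.mp hx)

lemma finsupp_deg_one (d : Fin 3 →₀ ℕ) (h : d.degree = 1) :
    ∃ i : Fin 3, d = Finsupp.single i 1 := by
  rw [finsupp_degree_eq_sum3] at h
  have h' : (d 0 = 1 ∧ d 1 = 0 ∧ d 2 = 0) ∨ (d 0 = 0 ∧ d 1 = 1 ∧ d 2 = 0) ∨
      (d 0 = 0 ∧ d 1 = 0 ∧ d 2 = 1) := by omega
  rcases h' with h' | h' | h'
  · exact ⟨0, Finsupp.ext fun k => by fin_cases k <;>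
      simp_all [Finsupp.single_apply]⟩
  · exact ⟨1, Finsupp.ext fun k => by fin_cases k <;>
      simp_all [Finsupp.single_apply]⟩
  · exact ⟨2, Finsupp.ext fun k => by fin_cases k <;>
      simp_all [Finsupp.single_apply]⟩

lemma finsupp_deg_two (d : Fin 3 →₀ ℕ) (h : d.degree = 2) :
    ∃ i j : Fin 3, d = Finsupp.single i 1 + Finsupp.single j 1 := by
  rw [finsupp_degree_eq_sum3] at h
  have h' : (d 0 = 2 ∧ d 1 = 0 ∧ d 2 = 0) ∨ (d 0 = 1 ∧ d 1 = 1 ∧ d 2 = 0) ∨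
      (d 0 = 1 ∧ d 1 = 0 ∧ d 2 = 1) ∨ (d 0 = 0 ∧ d 1 = 2 ∧ d 2 = 0) ∨
      (d 0 = 0 ∧ d 1 = 1 ∧ d 2 = 1) ∨ (d 0 = 0 ∧ d 1 = 0 ∧ d 2 = 2) := by omega
  rcases h' with h' | h' | h' | h' | h' | h'
  · exact ⟨0, 0, Finsupp.ext fun k => by fin_cases k <;>
      simp_all [Finsupp.single_apply]⟩
  · exact ⟨0, 1, Finsupp.ext fun k => by fin_cases k <;>
      simp_all [Finsupp.single_apply]⟩
  · exact ⟨0, 2, Finsupp.ext fun k => by fin_cases k <;>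
      simp_all [Finsupp.single_apply]⟩
  · exact ⟨1, 1, Finsupp.ext fun k => by fin_cases k <;>
      simp_all [Finsupp.single_apply]⟩
  · exact ⟨1, 2, Finsupp.ext fun k => by fin_cases k <;>
      simp_all [Finsupp.single_apply]⟩
  · exact ⟨2, 2, Finsupp.ext fun k => by fin_cases k <;>
      simp_all [Finsupp.single_apply]⟩

/-- A linear form all of whose linear coefficients vanish is zero. -/
lemma lin_eq_zero (p : Rp) (hp : p.IsHomogeneous 1)
    (h : ∀ i, MvPolynomial.coeff (Finsupp.single i 1) p = 0) : p = 0 := by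
  ext d
  rw [coeff_zero]
  by_contra hc
  have hd : d.degree = 1 := by
    rw [Finsupp.degree_eq_weight_one]
    exact hp hc
  obtain ⟨i, rfl⟩ := finsupp_deg_one d hd
  exact hc (h i)

lemma isLin_C_mul (t : ℂ) {p : Rp} (h : IsLin p) : IsLin (C t * p) := by
  simpa [IsLin] using (isHomogeneous_C (Fin 3) t).mul h

lemma isQuad_mul {p q : Rp} (hp : IsLin p) (hq : IsLin q) : IsQuad (p * q) := by
  simpa [IsQuad, one_add_one_eq_two] using hp.mul hq

/-- Every variable is a linear combination of a linearly independent triple of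
linear forms. -/
lemma lin_rep (v : Fin 3 → Rp) (hv : ∀ i, IsLin (v i))
    (hb : LinearIndependent ℂ v) (j : Fin 3) :
    ∃ c : Fin 3 → ℂ, (X j : Rp) = ∑ i, C (c i) * v i := by
  set M : Matrix (Fin 3) (Fin 3) ℂ :=
    Matrix.of (fun i k => coeff (Finsupp.single k 1) (v i)) with hM
  have hrows : LinearIndependent ℂ (fun i => M i) := by
    rw [Fintype.linearIndependent_iff]
    intro g hg
    have hcomb : (∑ i, g i • v i) = 0 := by
      apply lin_eq_zero
      · exact IsHomogeneous.sum _ _ _ fun i _ =>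
          ((homogeneousSubmodule (Fin 3) ℂ 1).smul_mem (g i) (hv i))
      · intro k
        have h2 := congrFun hg k
        simp only [Finset.sum_apply, Pi.smul_apply, smul_eq_mul, Pi.zero_apply] at h2
        simp only [coeff_sum, coeff_smul, smul_eq_mul]
        simpa [hM] using h2
    exact Fintype.linearIndependent_iff.mp hb g hcomb
  have hunit : IsUnit M := Matrix.linearIndependent_rows_iff_isUnit.mp hrows
  have hdet : IsUnit M.det := (Matrix.isUnit_iff_isUnit_det M).mp hunit
  have hMM : M⁻¹ * M = 1 := Matrix.nonsing_inv_mul M hdet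
  refine ⟨fun i => M⁻¹ j i, ?_⟩
  have hsub : (X j : Rp) - ∑ i, C (M⁻¹ j i) * v i = 0 := by
    apply lin_eq_zero
    · exact (isHomogeneous_X ℂ j).sub (IsHomogeneous.sum _ _ _ fun i _ =>
        isLin_C_mul (M⁻¹ j i) (hv i))
    · intro k
      have h1 : (∑ i, M⁻¹ j i * coeff (Finsupp.single k 1) (v i)) = (M⁻¹ * M) j k := by
        rw [Matrix.mul_apply]; rfl
      simp only [coeff_sub, coeff_sum, coeff_C_mul, coeff_X']
      rw [h1, hMM, Matrix.one_apply, sub_eq_zero]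
      by_cases h : j = k
      · simp [h]
      · have hne : ¬(Finsupp.single j (1 : ℕ) = Finsupp.single k 1) := by
          simpa [Finsupp.single_left_inj (one_ne_zero : (1:ℕ) ≠ 0)] using h
        simp [h, hne]
  exact sub_eq_zero.mp hsub

/-- Quadratic forms are combinations of the six quadratic monomials in a
linearly independent triple of linear forms. -/
lemma quad_rep (X₁ X₂ Z : Rp) (hX₁ : IsLin X₁) (hX₂ : IsLin X₂) (hZ : IsLin Z)
    (hbasis : LinearIndependent ℂ ![X₁, X₂, Z]) (q : Rp) (hq : IsQuad q) :
    ∃ c : Fin 6 → ℂ, q = C (c 0) * (X₁ * X₁) + C (c 1) * (X₁ * X₂) + C (c 2) * (X₁ * Z)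
      + C (c 3) * (X₂ * X₂) + C (c 4) * (X₂ * Z) + C (c 5) * (Z * Z) := by
  set v : Fin 3 → Rp := ![X₁, X₂, Z] with hvdef
  have hv : ∀ i, IsLin (v i) := by
    intro i; fin_cases i
    · exact hX₁
    · exact hX₂
    · exact hZ
  set m : Fin 6 → Rp := ![X₁ * X₁, X₁ * X₂, X₁ * Z, X₂ * X₂, X₂ * Z, Z * Z] with hmdef
  have mem : ∀ k : Fin 6, m k ∈ Submodule.span ℂ (Set.range m) :=
    fun k => Submodule.subset_span ⟨k, rfl⟩
  have hvv : ∀ i j : Fin 3, v i * v j ∈ Submodule.span ℂ (Set.range m) := by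
    intro i j
    fin_cases i <;> fin_cases j
    · exact mem 0
    · exact mem 1
    · exact mem 2
    · rw [mul_comm]; exact mem 1
    · exact mem 3
    · exact mem 4
    · rw [mul_comm]; exact mem 2
    · rw [mul_comm]; exact mem 4
    · exact mem 5
  have hX : ∀ i j : Fin 3, (X i * X j : Rp) ∈ Submodule.span ℂ (Set.range m) := by
    intro i j
    obtain ⟨a, ha⟩ := lin_rep v hv hbasis i
    obtain ⟨b, hbv⟩ := lin_rep v hv hbasis j
    rw [ha, hbv, Finset.sum_mul_sum]
    refine Submodule.sum_mem _ fun k _ => Submodule.sum_mem _ fun l _ => ?_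
    have he : (C (a k) * v k) * (C (b l) * v l) = (a k * b l) • (v k * v l) := by
      rw [smul_eq_C_mul, _root_.map_mul]; ring
    rw [he]
    exact Submodule.smul_mem _ _ (hvv k l)
  have hq' : q ∈ Submodule.span ℂ (Set.range m) := by
    nth_rewrite 1 [← support_sum_monomial_coeff q]
    refine Submodule.sum_mem _ fun d hd => ?_
    have hdeg : d.degree = 2 := by
      rw [Finsupp.degree_eq_weight_one]
      exact hq (MvPolynomial.mem_support_iff.mp hd)
    obtain ⟨i, j, rfl⟩ := finsupp_deg_two d hdeg
    have he : monomial (Finsupp.single i 1 + Finsupp.single j 1)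
        (coeff (Finsupp.single i 1 + Finsupp.single j 1) q) =
        (coeff (Finsupp.single i 1 + Finsupp.single j 1) q) • (X i * X j : Rp) := by
      rw [smul_eq_C_mul, X, X, monomial_mul, C_mul_monomial]
      simp
    rw [he]
    exact Submodule.smul_mem _ _ (hX i j)
  obtain ⟨c, hc⟩ := Submodule.mem_span_range_iff_exists_fun ℂ |>.mp hq'
  refine ⟨c, ?_⟩
  rw [← hc, Fin.sum_univ_six]
  simp only [smul_eq_C_mul]
  rfl

lemma mat3_ext {a b c d e f g h i a' b' c' d' e' f' g' h' i' : Rp}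
    (h1 : a = a') (h2 : b = b') (h3 : c = c') (h4 : d = d') (h5 : e = e') (h6 : f = f')
    (h7 : g = g') (h8 : h = h') (h9 : i = i') :
    !![a, b, c; d, e, f; g, h, i] = !![a', b', c'; d', e', f'; g', h', i'] := by
  subst h1 h2 h3 h4 h5 h6 h7 h8 h9; rfl

theorem stmt7 (X₁ X₂ Z : Rp) (hX₁ : IsLin X₁) (hX₂ : IsLin X₂) (hZ : IsLin Z)
    (hbasis : LinearIndependent ℂ ![X₁, X₂, Z])
    (q₁₁ q₁₂ q₂₁ q₂₂ : Rp) (hq₁₁ : IsQuad q₁₁) (hq₁₂ : IsQuad q₁₂)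
    (hq₂₁ : IsQuad q₂₁) (hq₂₂ : IsQuad q₂₂) :
    ∃ (A B : Matrix.GeneralLinearGroup (Fin 2) ℂ) (α β : ℂˣ) (φr ψc : Fin 2 → Rp),
      (∀ i, IsLin (φr i)) ∧ (∀ i, IsLin (ψc i)) ∧
      ∃ (a b : ℂ) (q₁₂' q₂₁' : Rp),
        q₁₂' ∈ Submodule.span ℂ ({X₁^2, X₁*X₂, X₁*Z, X₂^2, X₂*Z} : Set Rp) ∧
        IsQuad q₂₁' ∧
        nu2 (B : Matrix (Fin 2) (Fin 2) ℂ) (β : ℂ) ψc *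
            !![X₁, Z, 0; q₁₁, q₁₂, Z; q₂₁, q₂₂, X₂] *
            (nu1 (A : Matrix (Fin 2) (Fin 2) ℂ) (α : ℂ) φr)⁻¹ =
          !![X₁, Z, 0; C a * X₂^2, q₁₂', Z; q₂₁', C b * X₁^2, X₂] := by
  obtain ⟨p, hp⟩ := quad_rep X₁ X₂ Z hX₁ hX₂ hZ hbasis q₁₁ hq₁₁
  obtain ⟨c, hc⟩ := quad_rep X₁ X₂ Z hX₁ hX₂ hZ hbasis q₁₂ hq₁₂
  obtain ⟨r, hr⟩ := quad_rep X₁ X₂ Z hX₁ hX₂ hZ hbasis q₂₂ hq₂₂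
  set ψ₀ : Rp := -(C (p 0) * X₁ + C (p 1) * X₂ + C (c 5) * Z) with hψ₀
  set ψ₁ : Rp := -(C (r 2) * X₁ + C (r 4) * X₂ + C (r 5) * Z) with hψ₁
  set φ₀ : Rp := C (p 4) * X₂ + C (p 5) * Z - C (c 5 - p 2) * X₁ with hφ₀
  set φ₁ : Rp := C (r 1) * X₁ + C (r 3) * X₂ with hφ₁
  have hψ₀lin : IsLin ψ₀ := (((isLin_C_mul _ hX₁).add (isLin_C_mul _ hX₂)).add
    (isLin_C_mul _ hZ)).neg
  have hψ₁lin : IsLin ψ₁ := (((isLin_C_mul _ hX₁).add (isLin_C_mul _ hX₂)).add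
    (isLin_C_mul _ hZ)).neg
  have hφ₀lin : IsLin φ₀ := ((isLin_C_mul _ hX₂).add (isLin_C_mul _ hZ)).sub
    (isLin_C_mul _ hX₁)
  have hφ₁lin : IsLin φ₁ := (isLin_C_mul _ hX₁).add (isLin_C_mul _ hX₂)
  refine ⟨1, 1, 1, 1, ![φ₀, φ₁], ![ψ₀, ψ₁], ?_, ?_, p 3, r 0,
    C (c 0) * X₁^2 + C (c 1) * (X₁*X₂) + C (c 2 - p 0 - r 1) * (X₁*Z)
      + C (c 3) * X₂^2 + C (c 4 - p 1 - r 3) * (X₂*Z),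
    q₂₁ + ψ₁ * X₁ - φ₀ * X₂, ?_, ?_, ?_⟩
  · intro i; fin_cases i
    · exact hφ₀lin
    · exact hφ₁lin
  · intro i; fin_cases i
    · exact hψ₀lin
    · exact hψ₁lin
  · have key : ∀ x ∈ ({X₁^2, X₁*X₂, X₁*Z, X₂^2, X₂*Z} : Set Rp), ∀ t : ℂ,
        C t * x ∈ Submodule.span ℂ ({X₁^2, X₁*X₂, X₁*Z, X₂^2, X₂*Z} : Set Rp) := by
      intro x hx t
      rw [← smul_eq_C_mul]
      exact Submodule.smul_mem _ _ (Submodule.subset_span hx)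
    exact Submodule.add_mem _ (Submodule.add_mem _ (Submodule.add_mem _
      (Submodule.add_mem _ (key _ (by simp) _) (key _ (by simp) _)) (key _ (by simp) _))
      (key _ (by simp) _)) (key _ (by simp) _)
  · exact (hq₂₁.add (isQuad_mul hψ₁lin hX₁)).sub (isQuad_mul hφ₀lin hX₂)
  · have hone : ((1 : Matrix.GeneralLinearGroup (Fin 2) ℂ) : Matrix (Fin 2) (Fin 2) ℂ)
        = (1 : Matrix (Fin 2) (Fin 2) ℂ) := rfl
    have hN1e : nu1 ((1 : Matrix.GeneralLinearGroup (Fin 2) ℂ) : Matrix (Fin 2) (Fin 2) ℂ)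
        ((1 : ℂˣ) : ℂ) ![φ₀, φ₁] = !![1, 0, 0; 0, 1, 0; φ₀, φ₁, 1] := by
      rw [hone]
      ext i j
      fin_cases i <;> fin_cases j <;> simp [nu1, Matrix.one_apply]
    have hN2e : nu2 ((1 : Matrix.GeneralLinearGroup (Fin 2) ℂ) : Matrix (Fin 2) (Fin 2) ℂ)
        ((1 : ℂˣ) : ℂ) ![ψ₀, ψ₁] = !![1, 0, 0; ψ₀, 1, 0; ψ₁, 0, 1] := by
      rw [hone]
      ext i j
      fin_cases i <;> fin_cases j <;> simp [nu2, Matrix.one_apply]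
    rw [hN1e, hN2e]
    have hdet : IsUnit (!![1, 0, 0; 0, 1, 0; φ₀, φ₁, (1 : Rp)]).det := by
      have h1 : (!![1, 0, 0; 0, 1, 0; φ₀, φ₁, (1 : Rp)]).det = 1 := by
        simp [Matrix.det_fin_three]
      rw [h1]; exact isUnit_one
    have hmul : !![(1 : Rp), 0, 0; ψ₀, 1, 0; ψ₁, 0, 1] *
        !![X₁, Z, 0; q₁₁, q₁₂, Z; q₂₁, q₂₂, X₂] =
        !![X₁, Z, 0;
           C (p 3) * X₂^2,
             C (c 0) * X₁^2 + C (c 1) * (X₁*X₂) + C (c 2 - p 0 - r 1) * (X₁*Z)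
               + C (c 3) * X₂^2 + C (c 4 - p 1 - r 3) * (X₂*Z), Z;
           q₂₁ + ψ₁ * X₁ - φ₀ * X₂, C (r 0) * X₁^2, X₂] *
        !![1, 0, 0; 0, 1, 0; φ₀, φ₁, 1] := by
      rw [Matrix.mul_fin_three, Matrix.mul_fin_three]
      apply mat3_ext <;>
        first
          | (simp only [hψ₀, hψ₁, hφ₀, hφ₁, hp, hc, hr, map_sub, map_add, map_neg]; ring1)
          | ring1
    have hfin := congrArg
      (fun Y => Y * (!![1, 0, 0; 0, 1, 0; φ₀, φ₁, (1 : Rp)])⁻¹) hmul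
    conv at hfin => rhs; rw [Matrix.mul_assoc, Matrix.mul_nonsing_inv _ hdet, Matrix.mul_one]
    exact hfin

end
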